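/- The degree map d : G(T,R) → ℤ is a surjective group homomorphism; in particular G⁰ := {(φ,φ̄) ∈ G(T,R) : d(φ) = 0} is a normal subgroup of G(T,R), and the cosets of G⁰ in G(T,R) are exactly the nonempty sets G^k := {(φ,φ̄) ∈ G(T,R) : d(φ) = k}, k ∈ ℤ. -/

import Mathlib

open Module Submodule

noncomputable section

abbrev TT : Type := (ℕ → ℂ) × (ℕ →₀ ℂ)
abbrev RR : Type := (ℕ →₀ ℂ) × (ℕ → ℂ)

lemma lc_v_add (v w : ℕ → ℂ) (l : ℕ →₀ ℂ) :
    Finsupp.linearCombination ℂ (v + w) l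
      = Finsupp.linearCombination ℂ v l + Finsupp.linearCombination ℂ w l := by
  classical
  simp only [Finsupp.linearCombination_apply]
  rw [← Finsupp.sum_add]
  exact Finsupp.sum_congr fun i _ => by simp [Pi.add_apply, smul_add, mul_add]

lemma lc_v_smul (c : ℂ) (v : ℕ → ℂ) (l : ℕ →₀ ℂ) :
    Finsupp.linearCombination ℂ (c • v) l = c • Finsupp.linearCombination ℂ v l := by
  classical
  simp only [Finsupp.linearCombination_apply, Finsupp.smul_sum]
  exact Finsupp.sum_congr fun i _ => by simp [Pi.smul_apply, smul_comm, smul_eq_mul, mul_left_comm]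

/-- The nondegenerate pairing `p : T × R → ℂ`,
`p((ω,u),(w,ν)) = Σ_i ω(i)w(i) + Σ_i u(i)ν(i)`. -/
def pairB : TT →ₗ[ℂ] RR →ₗ[ℂ] ℂ :=
  LinearMap.mk₂ ℂ
    (fun x y => Finsupp.linearCombination ℂ x.1 y.1 + Finsupp.linearCombination ℂ y.2 x.2)
    (fun x x' y => by
      simp only [Prod.fst_add, Prod.snd_add, lc_v_add, map_add]; ring)
    (fun c x y => by
      simp only [Prod.smul_fst, Prod.smul_snd, lc_v_smul, map_smul, smul_add])
    (fun x y y' => by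
      simp only [Prod.fst_add, Prod.snd_add, lc_v_add, map_add]; ring)
    (fun c x y => by
      simp only [Prod.smul_fst, Prod.smul_snd, lc_v_smul, map_smul, smul_add])

/-- The Mackey-group condition on a pair of automorphisms:
`p(φ x, y) = p(x, φ̄ y)` for all `x ∈ T`, `y ∈ R`. -/
def IsMackey (φ : TT ≃ₗ[ℂ] TT) (ψ : RR ≃ₗ[ℂ] RR) : Prop :=
  ∀ (x : TT) (y : RR), pairB (φ x) y = pairB x (ψ y)

/-- `W^♯ = (ℕ→ℂ) × {0} ⊆ T`. -/
def Wsharp : Submodule ℂ TT := LinearMap.range (LinearMap.inl ℂ (ℕ → ℂ) (ℕ →₀ ℂ))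

/-- `U^♯ = {0} × (ℕ→ℂ) ⊆ R`. -/
def Usharp : Submodule ℂ RR := LinearMap.range (LinearMap.inr ℂ (ℕ →₀ ℂ) (ℕ → ℂ))

/-- `V = (ℕ→₀ℂ) × (ℕ→₀ℂ) ⊆ T`. -/
def Vsub : Submodule ℂ TT :=
  LinearMap.range
    ((Finsupp.lcoeFun : (ℕ →₀ ℂ) →ₗ[ℂ] (ℕ → ℂ)).prodMap
      (LinearMap.id : (ℕ →₀ ℂ) →ₗ[ℂ] (ℕ →₀ ℂ)))

/-- `W = (ℕ→₀ℂ) × {0} ⊆ T`. -/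
def Wsub : Submodule ℂ TT :=
  LinearMap.range
    ((LinearMap.inl ℂ (ℕ → ℂ) (ℕ →₀ ℂ)).comp
      (Finsupp.lcoeFun : (ℕ →₀ ℂ) →ₗ[ℂ] (ℕ → ℂ)))

/-- `π_U : T → (ℕ→₀ℂ)`, the second projection. -/
def piU : TT →ₗ[ℂ] (ℕ →₀ ℂ) := LinearMap.snd ℂ (ℕ → ℂ) (ℕ →₀ ℂ)

/-- `π_{W*} : R → (ℕ→₀ℂ)`, the first projection. -/
def piW : RR →ₗ[ℂ] (ℕ →₀ ℂ) := LinearMap.fst ℂ (ℕ →₀ ℂ) (ℕ → ℂ)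

/-- The degree `d(φ) = dim π_U(φ(W^♯)) − dim π_U(φ^{-1}(W^♯))`. -/
def deg (φ : TT ≃ₗ[ℂ] TT) : ℤ :=
  (Module.finrank ℂ ((Wsharp.map φ.toLinearMap).map piU) : ℤ) -
    (Module.finrank ℂ ((Wsharp.map φ.symm.toLinearMap).map piU) : ℤ)

/-- `span {(δ_i, 0) : i ≥ n} ⊆ T`. -/
def tailSpan (n : ℕ) : Submodule ℂ TT :=
  Submodule.span ℂ
    ((fun i => ((((Finsupp.single i (1 : ℂ)) : ℕ →₀ ℂ) : ℕ → ℂ), (0 : ℕ →₀ ℂ))) '' {i | n ≤ i})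

/-- `W'` is E-commensurable of index `k` with `W`:
`W' = G ⊕ span{(δ_i,0) : i ≥ n}` with `G ⊆ V` finite-dimensional of dimension `n + k`. -/
def Ecomm (W' : Submodule ℂ TT) (k : ℤ) : Prop :=
  ∃ (n : ℕ) (G : Submodule ℂ TT), G ≤ Vsub ∧ FiniteDimensional ℂ G ∧
    (Module.finrank ℂ G : ℤ) = (n : ℤ) + k ∧ Disjoint G (tailSpan n) ∧
    W' = G ⊔ tailSpan n

/-- `W'^⊥ = {y ∈ R : p(x,y) = 0 for all x ∈ W'}`. -/
def perpR (W' : Submodule ℂ TT) : Submodule ℂ RR :=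
  ⨅ x ∈ (W' : Set TT), LinearMap.ker (pairB x)

/-- `Y^⊥ = {x ∈ T : p(x,y) = 0 for all y ∈ Y}`. -/
def perpT (Y : Submodule ℂ RR) : Submodule ℂ TT :=
  ⨅ y ∈ (Y : Set RR), LinearMap.ker (pairB.flip y)

/-- The action `φ·W' = φ((W'^⊥)^⊥) ∩ V`. -/
def actOn (φ : TT ≃ₗ[ℂ] TT) (W' : Submodule ℂ TT) : Submodule ℂ TT :=
  ((perpT (perpR W')).map φ.toLinearMap) ⊓ Vsub

end
noncomputable section

/-- The Mackey group `G(T,R)` of pairs `(φ, φ̄)`, as a subgroup of the product of the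
automorphism group of `T` with the opposite of the automorphism group of `R`
(so that composition is componentwise). -/
def Mackey : Subgroup ((TT ≃ₗ[ℂ] TT) × (RR ≃ₗ[ℂ] RR)ᵐᵒᵖ) where
  carrier := {a | IsMackey a.1 a.2.unop}
  one_mem' := fun _ _ => rfl
  mul_mem' := by
    intro a b ha hb
    intro x y
    simp only [Prod.fst_mul, Prod.snd_mul]
    have h1 : (a.1 * b.1) x = a.1 (b.1 x) := rfl
    have h2 : ((a.2 * b.2).unop) y = b.2.unop (a.2.unop y) := rfl
    rw [h1, h2, ha, hb]
  inv_mem' := by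
    intro a ha
    intro x y
    have := ha (a.1⁻¹ x) (a.2.unop⁻¹ y)
    have h1 : a.1 (a.1⁻¹ x) = x := a.1.apply_symm_apply x
    have h2 : a.2.unop (a.2.unop⁻¹ y) = y := a.2.unop.apply_symm_apply y
    simp only [Prod.fst_inv, Prod.snd_inv]
    have h4 : (a.2⁻¹).unop = a.2.unop⁻¹ := rfl
    rw [h4]
    rw [h1, h2] at this
    exact this.symm

end
noncomputable section
open Finsupp

lemma lc_congr_support (v v' : ℕ → ℂ) (l : ℕ →₀ ℂ) (h : ∀ i ∈ l.support, v i = v' i) :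
    Finsupp.linearCombination ℂ v l = Finsupp.linearCombination ℂ v' l := by
  classical
  simp only [Finsupp.linearCombination_apply, Finsupp.sum]
  exact Finset.sum_congr rfl fun i hi => by rw [h i hi]

lemma lc_pi_single (j : ℕ) (a : ℂ) (l : ℕ →₀ ℂ) :
    Finsupp.linearCombination ℂ (Pi.single j a : ℕ → ℂ) l = l j * a := by
  classical
  simp only [Finsupp.linearCombination_apply, Finsupp.sum]
  rw [Finset.sum_eq_single j]
  · simp
  · intro i _ hij; simp [Pi.single_apply, hij]
  · intro h; simp [Finsupp.notMem_support_iff.1 h]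

lemma lc_single_right (l : ℕ →₀ ℂ) (j : ℕ) :
    Finsupp.linearCombination ℂ (Pi.single j (1:ℂ) : ℕ → ℂ) l = l j := by
  rw [lc_pi_single]; ring

/-- The key finiteness lemma: a linear map `C : ℂ^ℕ → ℂ^(ℕ)` all of whose coordinate
functionals are represented by finitely supported vectors has finite rank. -/
lemma finite_range_of_rows (c : ℕ → (ℕ →₀ ℂ)) (C : (ℕ → ℂ) →ₗ[ℂ] (ℕ →₀ ℂ))
    (hC : ∀ ω j, C ω j = Finsupp.linearCombination ℂ ω (c j)) :
    Module.Finite ℂ (LinearMap.range C) := by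
  classical
  by_cases hbd : ∃ N, ∀ j, ∀ i, N ≤ i → c j i = 0
  · obtain ⟨N, hN⟩ := hbd
    set e : (ℕ → ℂ) →ₗ[ℂ] (Fin N → ℂ) := LinearMap.funLeft ℂ ℂ (Fin.val) with he
    have hker : LinearMap.ker e ≤ LinearMap.ker C := by
      intro ω hω
      have hz : ∀ i, i < N → ω i = 0 := by
        intro i hi
        have := congrFun (LinearMap.mem_ker.1 hω) ⟨i, hi⟩
        simpa [he, LinearMap.funLeft] using this
      rw [LinearMap.mem_ker]
      ext j
      rw [hC, Finsupp.linearCombination_apply, Finsupp.sum]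
      apply Finset.sum_eq_zero
      intro i hi
      have hcne : c j i ≠ 0 := Finsupp.mem_support_iff.1 hi
      have hiN : i < N := by
        by_contra h
        exact hcne (hN j i (not_lt.1 h))
      rw [hz i hiN, smul_zero]
    set q := (LinearMap.ker e).liftQ C hker with hq
    haveI : Module.Finite ℂ ((ℕ → ℂ) ⧸ LinearMap.ker e) :=
      Module.Finite.equiv (LinearMap.quotKerEquivRange e).symm
    have hrange : LinearMap.range C = LinearMap.range q := by
      conv_lhs => rw [← Submodule.liftQ_mkQ (LinearMap.ker e) C hker]
      rw [LinearMap.range_comp, Submodule.range_mkQ, Submodule.map_top]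
    rw [hrange]
    infer_instance
  · exfalso
    push_neg at hbd
    choose J I hI hcne using hbd
    -- one step of the construction
    have hsupne : ∀ N, (c (J N)).support.Nonempty :=
      fun N => ⟨I N, Finsupp.mem_support_iff.2 (hcne N)⟩
    set step : ℕ × (ℕ →₀ ℂ) → ℕ × (ℕ →₀ ℂ) := fun s =>
      let j := J s.1
      let i := (c j).support.max' (hsupne s.1)
      (i + 1, s.2 + Finsupp.single i
        ((1 - Finsupp.linearCombination ℂ (⇑s.2) (c j)) / (c j i))) with hstep
    set st : ℕ → ℕ × (ℕ →₀ ℂ) := fun m => step^[m] (0, 0) with hst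
    set Nm : ℕ → ℕ := fun m => (st m).1 with hNm
    set wm : ℕ → (ℕ →₀ ℂ) := fun m => (st m).2 with hwm
    set jm : ℕ → ℕ := fun m => J (Nm m) with hjm
    set im : ℕ → ℕ := fun m => (c (jm m)).support.max' (hsupne (Nm m)) with him
    have hstsucc : ∀ m, st (m+1) = step (st m) := by
      intro m; rw [hst]; simp [Function.iterate_succ_apply']
    have hN1 : ∀ m, Nm (m+1) = im m + 1 := by
      intro m; show (st (m+1)).1 = _; rw [hstsucc]
    have hw1 : ∀ m, wm (m+1) = wm m + Finsupp.single (im m)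
        ((1 - Finsupp.linearCombination ℂ (⇑(wm m)) (c (jm m))) / (c (jm m) (im m))) := by
      intro m; show (st (m+1)).2 = _; rw [hstsucc]
    have hNle : ∀ m, Nm m ≤ im m := by
      intro m
      exact le_trans (hI (Nm m)) (Finset.le_max' _ _ (Finsupp.mem_support_iff.2 (hcne (Nm m))))
    have hNlt : ∀ m, Nm m < Nm (m+1) := by
      intro m; rw [hN1]; exact Nat.lt_succ_of_le (hNle m)
    have hNmono : ∀ m k, Nm m ≤ Nm (m + k) := by
      intro m k; induction k with
      | zero => simp
      | succ k ih => exact le_trans ih (le_of_lt (hNlt (m+k)))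
    have hNge : ∀ m, m ≤ Nm m := by
      intro m; induction m with
      | zero => simp
      | succ m ih => exact lt_of_le_of_lt ih (hNlt m)
    -- stability of w below Nm
    have hstab : ∀ m k i, i < Nm m → wm (m + k) i = wm m i := by
      intro m k
      induction k with
      | zero => intro i _; rfl
      | succ k ih =>
        intro i hi
        show wm ((m+k)+1) i = _
        rw [hw1 (m+k)]
        rw [Finsupp.add_apply, Finsupp.single_apply]
        have hne : im (m+k) ≠ i := by
          have : i < Nm (m+k) := lt_of_lt_of_le hi (hNmono m k)
          exact fun h => absurd (h ▸ hNle (m+k)) (not_le.2 this)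
        rw [if_neg hne, add_zero, ih i hi]
    -- the inner product after step m+1 equals 1
    have hone : ∀ m, Finsupp.linearCombination ℂ (⇑(wm (m+1))) (c (jm m)) = 1 := by
      intro m
      rw [hw1 m, Finsupp.coe_add, lc_v_add]
      have hcoe : ⇑(Finsupp.single (im m)
          ((1 - Finsupp.linearCombination ℂ (⇑(wm m)) (c (jm m))) / (c (jm m) (im m))))
          = Pi.single (im m)
          ((1 - Finsupp.linearCombination ℂ (⇑(wm m)) (c (jm m))) / (c (jm m) (im m))) := by
        ext i; rw [Finsupp.single_apply, Pi.single_apply]; simp [eq_comm]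
      rw [hcoe, lc_pi_single]
      have hmem : im m ∈ (c (jm m)).support := Finset.max'_mem _ _
      have hne0 : c (jm m) (im m) ≠ 0 := Finsupp.mem_support_iff.1 hmem
      field_simp
      ring
    -- supports of the chosen rows are below the next threshold
    have hsupp : ∀ m i, Nm (m+1) ≤ i → c (jm m) i = 0 := by
      intro m i hi
      by_contra h
      have : i ≤ im m := Finset.le_max' _ _ (Finsupp.mem_support_iff.2 h)
      rw [hN1 m] at hi; omega
    -- the limit vector
    set ω : ℕ → ℂ := fun i => wm (i+1) i with homega
    have hagree : ∀ m i, i < Nm (m+1) → ω i = wm (m+1) i := by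
      intro m i hi
      show wm (i+1) i = wm (m+1) i
      rcases le_or_gt (i+1) (m+1) with h | h
      · obtain ⟨k, hk⟩ := Nat.le.dest h
        have h2 : i < Nm (i+1) := lt_of_lt_of_le (Nat.lt_succ_self i) (hNge (i+1))
        rw [← hk]
        exact (hstab (i+1) k i h2).symm
      · obtain ⟨k, hk⟩ := Nat.le.dest (Nat.le_of_lt h)
        rw [← hk]
        exact (hstab (m+1) k i hi)
    have hval : ∀ m, (C ω) (jm m) = 1 := by
      intro m
      rw [hC]
      rw [lc_congr_support ω (⇑(wm (m+1))) (c (jm m)) ?_]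
      · exact hone m
      · intro i hi
        apply hagree m i
        by_contra h
        exact Finsupp.mem_support_iff.1 hi (hsupp m i (not_lt.1 h))
    have hjinj : Function.Injective jm := by
      have key : ∀ m m', m < m' → jm m ≠ jm m' := by
        intro m m' hmm heq
        have h1 : Nm (m+1) ≤ Nm m' := by
          obtain ⟨k, hk⟩ := Nat.le.dest hmm
          rw [← hk]; exact hNmono (m+1) k
        have h2 : Nm m' ≤ im m' := hNle m'
        have h3 : c (jm m) (im m') = 0 := hsupp m (im m') (le_trans h1 h2)
        rw [heq] at h3
        exact Finsupp.mem_support_iff.1 (Finset.max'_mem _ _) h3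
      intro m m' h
      by_contra hne
      rcases lt_or_gt_of_ne hne with hlt | hgt
      · exact key m m' hlt h
      · exact key m' m hgt h.symm
    have hsub : Set.range jm ⊆ ↑(C ω).support := by
      rintro _ ⟨m, rfl⟩
      simp only [Finset.coe_sort_coe, Finset.mem_coe, Finsupp.mem_support_iff]
      rw [hval m]; exact one_ne_zero
    exact Set.infinite_range_of_injective hjinj (Set.Finite.subset (Finset.finite_toSet _) hsub)
section Tower
variable {K V : Type*} [Field K] [AddCommGroup V] [Module K V]

open Submodule LinearMap

/-- The canonical projection between quotients by nested submodules. -/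
def qproj (D B : Submodule K V) (h : D ≤ B) : (V ⧸ D) →ₗ[K] (V ⧸ B) :=
  D.liftQ B.mkQ (by rw [Submodule.ker_mkQ]; exact h)

lemma qproj_comp (D B : Submodule K V) (h : D ≤ B) :
    (qproj D B h).comp D.mkQ = B.mkQ := Submodule.liftQ_mkQ _ _ _

lemma ker_qproj (D B : Submodule K V) (h : D ≤ B) :
    LinearMap.ker (qproj D B h) = B.map D.mkQ := by
  rw [qproj, Submodule.ker_liftQ, Submodule.ker_mkQ]

lemma map_mkQ_inf (A B D : Submodule K V) (h : D ≤ B) :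
    (A.map D.mkQ) ⊓ (B.map D.mkQ) = (A ⊓ B).map D.mkQ := by
  rw [Submodule.map_inf_eq_map_inf_comap, Submodule.comap_map_eq, Submodule.ker_mkQ,
    sup_of_le_left h]

lemma comap_subtype_eq {W : Type*} [AddCommGroup W] [Module K W]
    (S X : Submodule K W) : Submodule.comap S.subtype X = Submodule.comap S.subtype (X ⊓ S) := by
  ext x
  simp only [Submodule.mem_comap, Submodule.mem_inf]
  exact ⟨fun h => ⟨h, x.2⟩, fun h => h.1⟩

lemma finrank_comap_subtype {W : Type*} [AddCommGroup W] [Module K W]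
    (S X : Submodule K W) :
    Module.finrank K (Submodule.comap S.subtype X) = Module.finrank K (X ⊓ S : Submodule K W) := by
  rw [comap_subtype_eq]
  exact (Submodule.comapSubtypeEquivOfLe (inf_le_right : X ⊓ S ≤ S)).finrank_eq

lemma tower_eq (A B D : Submodule K V) (hDB : D ≤ B)
    [FiniteDimensional K (A.map D.mkQ)] :
    Module.finrank K (A.map D.mkQ)
      = Module.finrank K (A.map B.mkQ) + Module.finrank K ((A ⊓ B).map D.mkQ) := by
  set π := qproj D B hDB with hπ
  set S := A.map D.mkQ with hS
  have h := LinearMap.finrank_range_add_finrank_ker (π.comp S.subtype)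
  have hr : LinearMap.range (π.comp S.subtype) = A.map B.mkQ := by
    rw [LinearMap.range_comp, Submodule.range_subtype, hS, ← Submodule.map_comp,
      hπ, qproj_comp]
  have hk : LinearMap.ker (π.comp S.subtype) = Submodule.comap S.subtype (B.map D.mkQ) := by
    rw [LinearMap.ker_comp, hπ, ker_qproj]
  rw [hr, hk] at h
  rw [← h, finrank_comap_subtype]
  have : (B.map D.mkQ) ⊓ S = (A ⊓ B).map D.mkQ := by
    rw [hS, inf_comm, map_mkQ_inf A B D hDB]
  rw [this]

lemma tower_fin (A B D : Submodule K V) (hDB : D ≤ B)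
    [FiniteDimensional K (A.map B.mkQ)] [FiniteDimensional K ((A ⊓ B).map D.mkQ)] :
    FiniteDimensional K (A.map D.mkQ) := by
  set π := qproj D B hDB with hπ
  set S := A.map D.mkQ with hS
  set f := π.comp S.subtype with hf
  have hr : LinearMap.range f = A.map B.mkQ := by
    rw [hf, LinearMap.range_comp, Submodule.range_subtype, hS, ← Submodule.map_comp,
      hπ, qproj_comp]
  have hk : LinearMap.ker f = Submodule.comap S.subtype (B.map D.mkQ) := by
    rw [hf, LinearMap.ker_comp, hπ, ker_qproj]
  have hker : IsNoetherian K (LinearMap.ker f) := by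
    have h1 : (B.map D.mkQ) ⊓ S = (A ⊓ B).map D.mkQ := by
      rw [hS, inf_comm, map_mkQ_inf A B D hDB]
    rw [hk, comap_subtype_eq, h1]
    have hle : (A ⊓ B).map D.mkQ ≤ S := h1 ▸ inf_le_right
    have : Module.Finite K (Submodule.comap S.subtype ((A ⊓ B).map D.mkQ)) :=
      Module.Finite.equiv (Submodule.comapSubtypeEquivOfLe hle).symm
    exact (IsNoetherian.iff_fg (K := K)
      (V := Submodule.comap S.subtype ((A ⊓ B).map D.mkQ))).2 this
  have hquot : IsNoetherian K (S ⧸ LinearMap.ker f) := by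
    have e2 := LinearMap.quotKerEquivRange f
    rw [hr] at e2
    have : Module.Finite K (S ⧸ LinearMap.ker f) := Module.Finite.equiv e2.symm
    exact IsNoetherian.iff_fg.2 this
  exact IsNoetherian.iff_fg.1
    ((isNoetherian_iff_submodule_quotient (LinearMap.ker f)).2 ⟨hker, hquot⟩)

lemma map_equiv_eq (e : V ≃ₗ[K] V) (A B : Submodule K V) :
    (A.map B.mkQ).map (Submodule.Quotient.equiv B (B.map e.toLinearMap) e rfl).toLinearMap
      = (A.map e.toLinearMap).map (B.map e.toLinearMap).mkQ := by
  rw [← Submodule.map_comp, ← Submodule.map_comp]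
  congr 1

lemma finrank_map_equiv (e : V ≃ₗ[K] V) (A B : Submodule K V) :
    Module.finrank K ((A.map e.toLinearMap).map (B.map e.toLinearMap).mkQ)
      = Module.finrank K (A.map B.mkQ) := by
  rw [← map_equiv_eq e A B]
  exact LinearEquiv.finrank_map_eq _ _

lemma fin_map_equiv (e : V ≃ₗ[K] V) (A B : Submodule K V)
    [FiniteDimensional K (A.map B.mkQ)] :
    FiniteDimensional K ((A.map e.toLinearMap).map (B.map e.toLinearMap).mkQ) := by
  rw [← map_equiv_eq e A B]
  infer_instance

end Tower
section Cocycle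
variable {K V : Type*} [Field K] [AddCommGroup V] [Module K V]
open Submodule Module

/-- Relative dimension of two commensurable subspaces. -/
def reld (A B : Submodule K V) : ℤ :=
  (Module.finrank K (A.map B.mkQ) : ℤ) - Module.finrank K (B.map A.mkQ)

lemma reld_cocycle (A B C : Submodule K V)
    (hAB : FiniteDimensional K (A.map B.mkQ)) (hBA : FiniteDimensional K (B.map A.mkQ))
    (hBC : FiniteDimensional K (B.map C.mkQ)) (hCB : FiniteDimensional K (C.map B.mkQ)) :
    reld A C = reld A B + reld B C := by
  classical
  set D := A ⊓ B ⊓ C with hD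
  have hDA : D ≤ A := le_trans inf_le_left inf_le_left
  have hDB : D ≤ B := le_trans inf_le_left inf_le_right
  have hDC : D ≤ C := inf_le_right
  have hbot : FiniteDimensional K ((D : Submodule K V).map D.mkQ) := by
    rw [Submodule.mkQ_map_self]; infer_instance
  haveI fABD : FiniteDimensional K ((A ⊓ B).map D.mkQ) := by
    haveI h1 : FiniteDimensional K ((A ⊓ B).map C.mkQ) :=
      Submodule.finiteDimensional_of_le (Submodule.map_mono inf_le_right : (A ⊓ B).map C.mkQ ≤ B.map C.mkQ)
    haveI h2 : FiniteDimensional K (((A ⊓ B) ⊓ C).map D.mkQ) := by rw [← hD]; exact hbot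
    exact tower_fin (A ⊓ B) C D hDC
  haveI fBCD : FiniteDimensional K ((B ⊓ C).map D.mkQ) := by
    haveI h1 : FiniteDimensional K ((B ⊓ C).map A.mkQ) :=
      Submodule.finiteDimensional_of_le (Submodule.map_mono inf_le_left : (B ⊓ C).map A.mkQ ≤ B.map A.mkQ)
    haveI h2 : FiniteDimensional K (((B ⊓ C) ⊓ A).map D.mkQ) := by
      have : (B ⊓ C) ⊓ A = D := by rw [hD]; ext x; simp; tauto
      rw [this]; exact hbot
    exact tower_fin (B ⊓ C) A D hDA
  haveI fACD : FiniteDimensional K ((A ⊓ C).map D.mkQ) := by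
    haveI h1 : FiniteDimensional K ((A ⊓ C).map B.mkQ) :=
      Submodule.finiteDimensional_of_le (Submodule.map_mono inf_le_left : (A ⊓ C).map B.mkQ ≤ A.map B.mkQ)
    haveI h2 : FiniteDimensional K (((A ⊓ C) ⊓ B).map D.mkQ) := by
      have : (A ⊓ C) ⊓ B = D := by rw [hD]; ext x; simp; tauto
      rw [this]; exact hbot
    exact tower_fin (A ⊓ C) B D hDB
  haveI fBAD : FiniteDimensional K ((B ⊓ A).map D.mkQ) := by
    rw [inf_comm]; exact fABD
  haveI fCBD : FiniteDimensional K ((C ⊓ B).map D.mkQ) := by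
    rw [inf_comm]; exact fBCD
  haveI fCAD : FiniteDimensional K ((C ⊓ A).map D.mkQ) := by
    rw [inf_comm]; exact fACD
  haveI fAD : FiniteDimensional K (A.map D.mkQ) := tower_fin A B D hDB
  haveI fBD : FiniteDimensional K (B.map D.mkQ) := tower_fin B A D hDA
  haveI fCD : FiniteDimensional K (C.map D.mkQ) := tower_fin C B D hDB
  have e1 := tower_eq A B D hDB
  have e2 := tower_eq B A D hDA
  have e3 := tower_eq B C D hDC
  have e4 := tower_eq C B D hDB
  have e5 := tower_eq A C D hDC
  have e6 := tower_eq C A D hDA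
  rw [show B ⊓ A = A ⊓ B from inf_comm B A] at e2
  rw [show C ⊓ B = B ⊓ C from inf_comm C B] at e4
  rw [show C ⊓ A = A ⊓ C from inf_comm C A] at e6
  unfold reld
  omega

lemma reld_map_equiv (e : V ≃ₗ[K] V) (A B : Submodule K V) :
    reld (A.map e.toLinearMap) (B.map e.toLinearMap) = reld A B := by
  unfold reld
  rw [finrank_map_equiv e A B, finrank_map_equiv e B A]

end Cocycle
noncomputable section DegLemmas
open Submodule Module

lemma pairB_apply (x : TT) (y : RR) :
    pairB x y = Finsupp.linearCombination ℂ x.1 y.1 + Finsupp.linearCombination ℂ y.2 x.2 := rfl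

lemma ker_piU : LinearMap.ker piU = Wsharp := by
  ext x
  simp only [LinearMap.mem_ker, Wsharp, LinearMap.mem_range, LinearMap.inl_apply]
  constructor
  · intro h
    exact ⟨x.1, by rw [Prod.ext_iff]; exact ⟨rfl, h.symm⟩⟩
  · rintro ⟨ω, rfl⟩; rfl

/-- The induced injection `TT ⧸ W^♯ → (ℕ →₀ ℂ)`. -/
def gW : (TT ⧸ Wsharp) →ₗ[ℂ] (ℕ →₀ ℂ) :=
  Wsharp.liftQ piU (le_of_eq ker_piU.symm)

lemma gW_comp : gW.comp Wsharp.mkQ = piU := Submodule.liftQ_mkQ _ _ _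

lemma gW_inj : Function.Injective gW := by
  rw [← LinearMap.ker_eq_bot, gW, Submodule.ker_liftQ, ker_piU, Submodule.mkQ_map_self]

lemma map_gW (S : Submodule ℂ TT) : (S.map Wsharp.mkQ).map gW = S.map piU := by
  rw [← Submodule.map_comp, gW_comp]

lemma finrank_piU_eq (S : Submodule ℂ TT) :
    Module.finrank ℂ (S.map piU) = Module.finrank ℂ (S.map Wsharp.mkQ) := by
  rw [← map_gW]
  exact ((Submodule.equivMapOfInjective gW gW_inj (S.map Wsharp.mkQ)).finrank_eq).symm

lemma fin_piU_transfer (S : Submodule ℂ TT) (h : Module.Finite ℂ (S.map piU)) :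
    FiniteDimensional ℂ (S.map Wsharp.mkQ) := by
  have e := Submodule.equivMapOfInjective gW gW_inj (S.map Wsharp.mkQ)
  rw [map_gW] at e
  exact Module.Finite.equiv e.symm

lemma mackey_fin (a : Mackey) :
    Module.Finite ℂ ((Wsharp.map a.val.1.toLinearMap).map piU) := by
  classical
  set φ := a.val.1 with hφ
  set ψ := a.val.2.unop with hψ
  set c : ℕ → (ℕ →₀ ℂ) := fun j => (ψ ((0 : ℕ →₀ ℂ), (Pi.single j 1 : ℕ → ℂ))).1 with hc
  set C : (ℕ → ℂ) →ₗ[ℂ] (ℕ →₀ ℂ) :=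
    piU ∘ₗ (φ.toLinearMap ∘ₗ LinearMap.inl ℂ (ℕ → ℂ) (ℕ →₀ ℂ)) with hC
  have hrange : (Wsharp.map φ.toLinearMap).map piU = LinearMap.range C := by
    rw [hC, LinearMap.range_comp, LinearMap.range_comp, Wsharp]
  rw [hrange]
  apply finite_range_of_rows c
  intro ω j
  have hp := a.property (ω, 0) ((0 : ℕ →₀ ℂ), (Pi.single j 1 : ℕ → ℂ))
  rw [pairB_apply, pairB_apply] at hp
  simp only [map_zero, zero_add, add_zero] at hp
  rw [lc_single_right] at hp
  have h1 : C ω = (φ (ω, 0)).2 := rfl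
  rw [h1, hp]

lemma mackey_inv_val (a : Mackey) : (a⁻¹).val.1 = a.val.1⁻¹ := rfl

lemma mackey_fin_symm (a : Mackey) :
    Module.Finite ℂ ((Wsharp.map a.val.1.symm.toLinearMap).map piU) := mackey_fin a⁻¹

lemma map_symm_map (e : TT ≃ₗ[ℂ] TT) (S : Submodule ℂ TT) :
    (S.map e.symm.toLinearMap).map e.toLinearMap = S := by
  rw [← Submodule.map_comp]
  simp

/-- finiteness of the first piece of `reld` for a Mackey pair -/
lemma mackey_finW1 (a : Mackey) :
    FiniteDimensional ℂ ((Wsharp.map a.val.1.toLinearMap).map Wsharp.mkQ) :=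
  fin_piU_transfer _ (mackey_fin a)

lemma mackey_finW2 (a : Mackey) :
    FiniteDimensional ℂ (Wsharp.map (Wsharp.map a.val.1.toLinearMap).mkQ) := by
  haveI h1 : FiniteDimensional ℂ ((Wsharp.map a.val.1.symm.toLinearMap).map Wsharp.mkQ) :=
    fin_piU_transfer _ (mackey_fin_symm a)
  haveI h2 := fin_map_equiv a.val.1 (Wsharp.map a.val.1.symm.toLinearMap) Wsharp
  rw [map_symm_map a.val.1 Wsharp] at h2
  exact h2

lemma deg_eq_reld (a : Mackey) :
    deg a.val.1 = reld (Wsharp.map a.val.1.toLinearMap) Wsharp := by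
  unfold deg reld
  rw [finrank_piU_eq, finrank_piU_eq]
  congr 2
  have h := finrank_map_equiv a.val.1 (Wsharp.map a.val.1.symm.toLinearMap) Wsharp
  rw [map_symm_map a.val.1 Wsharp] at h
  exact h.symm

lemma mackey_mul_val (a b : Mackey) :
    ((a * b : Mackey) : (TT ≃ₗ[ℂ] TT) × (RR ≃ₗ[ℂ] RR)ᵐᵒᵖ).1.toLinearMap
      = a.val.1.toLinearMap.comp b.val.1.toLinearMap := rfl

lemma deg_mul (a b : Mackey) :
    deg ((a * b : Mackey) : (TT ≃ₗ[ℂ] TT) × (RR ≃ₗ[ℂ] RR)ᵐᵒᵖ).1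
      = deg a.val.1 + deg b.val.1 := by
  classical
  set W := Wsharp with hW
  set φ := a.val.1 with hφ
  set χ := b.val.1 with hχ
  have hA : W.map ((a * b : Mackey) : (TT ≃ₗ[ℂ] TT) × (RR ≃ₗ[ℂ] RR)ᵐᵒᵖ).1.toLinearMap
      = (W.map χ.toLinearMap).map φ.toLinearMap := by
    rw [mackey_mul_val, Submodule.map_comp]
  rw [deg_eq_reld, deg_eq_reld, deg_eq_reld, hA]
  haveI := mackey_finW1 b
  haveI := mackey_finW2 b
  haveI hAB : FiniteDimensional ℂ
      (((W.map χ.toLinearMap).map φ.toLinearMap).map ((W.map φ.toLinearMap)).mkQ) :=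
    fin_map_equiv φ (W.map χ.toLinearMap) W
  haveI hBA : FiniteDimensional ℂ
      ((W.map φ.toLinearMap).map (((W.map χ.toLinearMap).map φ.toLinearMap)).mkQ) :=
    fin_map_equiv φ W (W.map χ.toLinearMap)
  haveI hBC : FiniteDimensional ℂ ((W.map φ.toLinearMap).map W.mkQ) := mackey_finW1 a
  haveI hCB : FiniteDimensional ℂ (W.map (W.map φ.toLinearMap).mkQ) := mackey_finW2 a
  rw [reld_cocycle ((W.map χ.toLinearMap).map φ.toLinearMap) (W.map φ.toLinearMap) W
    hAB hBA hBC hCB]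
  rw [reld_map_equiv φ (W.map χ.toLinearMap) W]
  ring

end DegLemmas
noncomputable section Shift
open Finsupp Submodule Module

lemma zero_notin_succ_range : (0 : ℕ) ∉ Set.range Nat.succ := by
  rintro ⟨j, hj⟩; exact Nat.succ_ne_zero j hj

lemma cons_tail (u : ℕ →₀ ℂ) :
    Finsupp.single 0 (u 0) + Finsupp.mapDomain Nat.succ
      (Finsupp.comapDomain Nat.succ u Nat.succ_injective.injOn) = u := by
  ext i
  cases i with
  | zero =>
    rw [Finsupp.add_apply, Finsupp.single_apply, if_pos rfl,
      Finsupp.mapDomain_notin_range _ _ zero_notin_succ_range, add_zero]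
  | succ j =>
    rw [Finsupp.add_apply, Finsupp.single_apply, if_neg (Nat.succ_ne_zero j).symm,
      Finsupp.mapDomain_apply Nat.succ_injective, Finsupp.comapDomain_apply, zero_add]

def headT : TT →ₗ[ℂ] (ℕ → ℂ) where
  toFun x := fun i => Nat.casesOn i (x.2 0) (fun j => x.1 j)
  map_add' x y := by funext i; cases i <;> simp
  map_smul' c x := by funext i; cases i <;> simp

def headR : RR →ₗ[ℂ] (ℕ → ℂ) where
  toFun y := fun i => Nat.casesOn i (y.1 0) (fun j => y.2 j)
  map_add' x y := by funext i; cases i <;> simp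
  map_smul' c x := by funext i; cases i <;> simp

def sigmaF : TT →ₗ[ℂ] TT :=
  LinearMap.prod headT
    ((Finsupp.lcomapDomain Nat.succ Nat.succ_injective).comp (LinearMap.snd ℂ (ℕ → ℂ) (ℕ →₀ ℂ)))

def sigmaG : TT →ₗ[ℂ] TT :=
  LinearMap.prod
    ((LinearMap.funLeft ℂ ℂ Nat.succ).comp (LinearMap.fst ℂ (ℕ → ℂ) (ℕ →₀ ℂ)))
    (((Finsupp.lsingle 0).comp ((LinearMap.proj 0).comp (LinearMap.fst ℂ (ℕ → ℂ) (ℕ →₀ ℂ))))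
      + ((Finsupp.lmapDomain ℂ ℂ Nat.succ).comp (LinearMap.snd ℂ (ℕ → ℂ) (ℕ →₀ ℂ))))

lemma sigmaF_apply (x : TT) :
    sigmaF x = (fun i => Nat.casesOn i (x.2 0) (fun j => x.1 j),
      Finsupp.comapDomain Nat.succ x.2 Nat.succ_injective.injOn) := rfl

lemma sigmaG_apply (x : TT) :
    sigmaG x = (fun i => x.1 (i+1),
      Finsupp.single 0 (x.1 0) + Finsupp.mapDomain Nat.succ x.2) := rfl

def sigma : TT ≃ₗ[ℂ] TT := LinearEquiv.ofLinear sigmaF sigmaG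
  (by
    apply LinearMap.ext
    rintro ⟨ω, u⟩
    rw [LinearMap.comp_apply, sigmaG_apply, sigmaF_apply]
    apply Prod.ext
    · funext i
      cases i with
      | zero => simp [Finsupp.single_apply,
          Finsupp.mapDomain_notin_range _ _ zero_notin_succ_range]
      | succ j => rfl
    · show Finsupp.comapDomain Nat.succ _ _ = u
      ext i
      rw [Finsupp.comapDomain_apply, Finsupp.add_apply, Finsupp.single_apply,
        if_neg (Nat.succ_ne_zero i).symm, Finsupp.mapDomain_apply Nat.succ_injective, zero_add])
  (by
    apply LinearMap.ext
    rintro ⟨ω, u⟩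
    rw [LinearMap.comp_apply, sigmaF_apply, sigmaG_apply]
    apply Prod.ext
    · funext i; rfl
    · show Finsupp.single 0 (u 0) + _ = u
      exact cons_tail u)

def psiF : RR →ₗ[ℂ] RR :=
  LinearMap.prod
    ((Finsupp.lcomapDomain Nat.succ Nat.succ_injective).comp (LinearMap.fst ℂ (ℕ →₀ ℂ) (ℕ → ℂ)))
    headR

def psiG : RR →ₗ[ℂ] RR :=
  LinearMap.prod
    (((Finsupp.lsingle 0).comp ((LinearMap.proj 0).comp (LinearMap.snd ℂ (ℕ →₀ ℂ) (ℕ → ℂ))))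
      + ((Finsupp.lmapDomain ℂ ℂ Nat.succ).comp (LinearMap.fst ℂ (ℕ →₀ ℂ) (ℕ → ℂ))))
    ((LinearMap.funLeft ℂ ℂ Nat.succ).comp (LinearMap.snd ℂ (ℕ →₀ ℂ) (ℕ → ℂ)))

lemma psiF_apply (y : RR) :
    psiF y = (Finsupp.comapDomain Nat.succ y.1 Nat.succ_injective.injOn,
      fun i => Nat.casesOn i (y.1 0) (fun j => y.2 j)) := rfl

lemma psiG_apply (y : RR) :
    psiG y = (Finsupp.single 0 (y.2 0) + Finsupp.mapDomain Nat.succ y.1,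
      fun i => y.2 (i+1)) := rfl

def psi : RR ≃ₗ[ℂ] RR := LinearEquiv.ofLinear psiF psiG
  (by
    apply LinearMap.ext
    rintro ⟨w, ν⟩
    rw [LinearMap.comp_apply, psiG_apply, psiF_apply]
    apply Prod.ext
    · show Finsupp.comapDomain Nat.succ _ _ = w
      ext i
      rw [Finsupp.comapDomain_apply, Finsupp.add_apply, Finsupp.single_apply,
        if_neg (Nat.succ_ne_zero i).symm, Finsupp.mapDomain_apply Nat.succ_injective, zero_add]
    · funext i
      cases i with
      | zero => simp [Finsupp.single_apply,
          Finsupp.mapDomain_notin_range _ _ zero_notin_succ_range]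
      | succ j => rfl)
  (by
    apply LinearMap.ext
    rintro ⟨w, ν⟩
    rw [LinearMap.comp_apply, psiF_apply, psiG_apply]
    apply Prod.ext
    · show Finsupp.single 0 (w 0) + _ = w
      exact cons_tail w
    · funext i; rfl)

lemma lc_cases_head (a : ℂ) (v : ℕ → ℂ) (w : ℕ →₀ ℂ) :
    Finsupp.linearCombination ℂ (fun i => Nat.casesOn i a (fun j => v j) : ℕ → ℂ) w
      = w 0 * a + Finsupp.linearCombination ℂ v
          (Finsupp.comapDomain Nat.succ w Nat.succ_injective.injOn) := by
  conv_lhs => rw [← cons_tail w]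
  rw [map_add, Finsupp.linearCombination_single, Finsupp.linearCombination_mapDomain]
  rw [smul_eq_mul]
  rfl

lemma sigma_isMackey : IsMackey sigma psi := by
  rintro ⟨ω, u⟩ ⟨w, ν⟩
  rw [pairB_apply, pairB_apply]
  have h1 : sigma (ω, u) = sigmaF (ω, u) := rfl
  have h2 : psi (w, ν) = psiF (w, ν) := rfl
  rw [h1, h2, sigmaF_apply, psiF_apply]
  dsimp only
  rw [lc_cases_head (u 0) ω w, lc_cases_head (w 0) ν u]
  ring

def sigmaM : Mackey := ⟨(sigma, MulOpposite.op psi), sigma_isMackey⟩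

lemma deg_sigma : deg sigma = -1 := by
  classical
  unfold deg
  have h1 : (Wsharp.map sigma.toLinearMap).map piU = ⊥ := by
    rw [Wsharp, ← LinearMap.range_comp, ← LinearMap.range_comp]
    rw [show piU ∘ₗ (sigma.toLinearMap ∘ₗ LinearMap.inl ℂ (ℕ → ℂ) (ℕ →₀ ℂ)) = 0 from ?_,
      LinearMap.range_zero]
    apply LinearMap.ext
    intro ω
    show piU (sigmaF (ω, 0)) = 0
    rw [sigmaF_apply]
    show Finsupp.comapDomain Nat.succ (0 : ℕ →₀ ℂ) _ = 0
    ext i; rw [Finsupp.comapDomain_apply]; rfl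
  have h2 : (Wsharp.map sigma.symm.toLinearMap).map piU
      = LinearMap.range (Finsupp.lsingle (M := ℂ) (R := ℂ) 0) := by
    rw [Wsharp, ← LinearMap.range_comp, ← LinearMap.range_comp]
    apply le_antisymm
    · rintro x ⟨ω, rfl⟩
      refine ⟨ω 0, ?_⟩
      show Finsupp.single 0 (ω 0) = piU (sigma.symm (ω, 0))
      have : sigma.symm (ω, 0) = sigmaG (ω, 0) := rfl
      rw [this, sigmaG_apply]
      show _ = Finsupp.single 0 (ω 0) + Finsupp.mapDomain Nat.succ 0
      rw [Finsupp.mapDomain_zero, add_zero]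
    · rintro x ⟨a, rfl⟩
      refine ⟨(fun _ => a), ?_⟩
      show piU (sigma.symm ((fun _ => a), 0)) = Finsupp.single 0 a
      have : sigma.symm ((fun _ => a : ℕ → ℂ), 0) = sigmaG ((fun _ => a), 0) := rfl
      rw [this, sigmaG_apply]
      show Finsupp.single 0 a + Finsupp.mapDomain Nat.succ 0 = Finsupp.single 0 a
      rw [Finsupp.mapDomain_zero, add_zero]
  rw [h1, h2]
  rw [finrank_bot]
  have hinj : Function.Injective (Finsupp.lsingle (M := ℂ) (R := ℂ) 0) := by
    intro a b hab
    have h := congrArg (fun (f : ℕ →₀ ℂ) => f 0) hab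
    simpa using h
  have h3 := (LinearEquiv.ofInjective _ hinj).finrank_eq
  rw [← h3, Module.finrank_self]
  norm_num

end Shift
noncomputable section Assemble
open Pointwise

lemma deg_one_mackey : deg ((1 : Mackey)).val.1 = 0 := by
  have h := deg_mul 1 1
  rw [mul_one] at h
  omega

/-- The degree as a group homomorphism into `Multiplicative ℤ`. -/
def dHom : Mackey →* Multiplicative ℤ where
  toFun a := Multiplicative.ofAdd (deg a.val.1)
  map_one' := by show Multiplicative.ofAdd _ = _; rw [deg_one_mackey]; rfl
  map_mul' a b := by
    have h := deg_mul a b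
    show Multiplicative.ofAdd _ = Multiplicative.ofAdd (deg a.val.1 + deg b.val.1)
    rw [← h]

lemma deg_inv_mackey (a : Mackey) : deg (a⁻¹).val.1 = - deg a.val.1 := by
  have h := deg_mul a a⁻¹
  rw [mul_inv_cancel] at h
  rw [deg_one_mackey] at h
  omega

lemma deg_zpow (n : ℤ) : deg ((sigmaM ^ n).val.1) = -n := by
  have h := map_zpow dHom sigmaM n
  have h2 : Multiplicative.toAdd (dHom (sigmaM ^ n)) = deg ((sigmaM ^ n).val.1) := rfl
  have h3 : Multiplicative.toAdd ((dHom sigmaM) ^ n) = n • Multiplicative.toAdd (dHom sigmaM) := by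
    rw [toAdd_zpow]
  have h4 : Multiplicative.toAdd (dHom sigmaM) = deg sigma := rfl
  rw [h] at h2
  rw [h3, h4, deg_sigma] at h2
  rw [← h2]
  simp

end Assemble


open Pointwise in
set_option synthInstance.maxHeartbeats 1000000 in
/-- The degree is a surjective group homomorphism `G(T,R) → ℤ`; `G⁰` is a normal subgroup
whose cosets are exactly the (nonempty) fibers `G^k` of the degree. -/
theorem stmt11 :
    (∀ a b : Mackey, deg ((a * b : Mackey) : (TT ≃ₗ[ℂ] TT) × (RR ≃ₗ[ℂ] RR)ᵐᵒᵖ).1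
        = deg a.val.1 + deg b.val.1) ∧
    (∀ k : ℤ, ∃ a : Mackey, deg a.val.1 = k) ∧
    (∃ G0 : Subgroup Mackey, G0.Normal ∧ (∀ a : Mackey, a ∈ G0 ↔ deg a.val.1 = 0) ∧
      ∀ a : Mackey, a • (G0 : Set Mackey) = {b : Mackey | deg b.val.1 = deg a.val.1}) := by
  refine ⟨deg_mul, ?_, ?_⟩
  · intro k
    exact ⟨sigmaM ^ (-k), by rw [deg_zpow]; ring⟩
  · refine ⟨dHom.ker, MonoidHom.normal_ker dHom, ?_, ?_⟩
    · intro a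
      rw [MonoidHom.mem_ker]
      constructor
      · intro h
        have h2 := congrArg Multiplicative.toAdd h
        exact h2
      · intro h
        show Multiplicative.ofAdd (deg a.val.1) = 1
        rw [h]; rfl
    · intro a
      ext b
      rw [Set.mem_smul_set_iff_inv_smul_mem]
      have hsm : a⁻¹ • b = a⁻¹ * b := rfl
      rw [hsm]
      show a⁻¹ * b ∈ dHom.ker ↔ _
      rw [MonoidHom.mem_ker]
      have hm := deg_mul a⁻¹ b
      have hi := deg_inv_mackey a
      constructor
      · intro h
        have h2 := congrArg Multiplicative.toAdd h
        simp only [toAdd_one] at h2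
        have h3 : deg ((a⁻¹ * b : Mackey)).val.1 = 0 := h2
        rw [hm, hi] at h3
        simp only [Set.mem_setOf_eq]
        omega
      · intro h
        simp only [Set.mem_setOf_eq] at h
        show Multiplicative.ofAdd (deg ((a⁻¹ * b : Mackey)).val.1) = 1
        rw [hm, hi, h]
        simp
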